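/- Let L be a finite relational language with maximum arity r ≥ 2 and let H be a hereditary L-property with VC*_{r-1}(H) = d < ∞. Then for every formula φ(x;ȳ) ∈ rel(L) with a single object variable x and every sufficiently large n, the family F_φ(n) = { U ⊆ [n]^{1+|ȳ|} : some M ∈ H_n has φ(M) = U } satisfies VC_r(F_φ(n)) ≤ d. -/

import Mathlib

open FirstOrder Set Function Filter

universe u v w

namespace PaperVC

/-- `𝔸` is an `(ℓ,t)`-box of height `m` in `X`: it is a concatenation product `A₁ ⋯ A_ℓ` of sets
`A_i ⊆ X^{k_i}` (`k_i ≥ 1`, `k₁+⋯+k_ℓ = t`); the fibers of a monotone surjection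
`c : Fin t → Fin ℓ` encode the consecutive blocks of coordinates, and each `A_i` has size `m`.
By convention a `(0,t)`-box with `t ≥ 1` is a singleton, and a `(0,0)`-box is the empty set. -/
def IsBoxOfHeight (X : Type*) (ℓ t m : ℕ) (𝔸 : Set (Fin t → X)) : Prop :=
  (ℓ = 0 ∧ t = 0 ∧ 𝔸 = ∅) ∨
  (ℓ = 0 ∧ 0 < t ∧ ∃ b, 𝔸 = {b}) ∨
  (0 < ℓ ∧ ∃ c : Fin t → Fin ℓ, Monotone c ∧ Function.Surjective c ∧
    ∃ A : (i : Fin ℓ) → Set ({j : Fin t // c j = i} → X),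
      (∀ i, (A i).Finite ∧ (A i).ncard = m) ∧
      𝔸 = { b | ∀ i, (fun j : {j : Fin t // c j = i} => b j.1) ∈ A i })

/-- The underlying set of a set of tuples: the set of all coordinates of its tuples. -/
def underlying {X : Type*} {t : ℕ} (𝔹 : Set (Fin t → X)) : Set X :=
  { x | ∃ b ∈ 𝔹, ∃ j, b j = x }

/-- A family `F` of subsets of `Y` shatters `A ⊆ Y` if every subset of `A` is cut out by a
member of `F`. -/
def Shatters {Y : Type*} (F : Set (Set Y)) (A : Set Y) : Prop :=
  ∀ B ⊆ A, ∃ S ∈ F, S ∩ A = B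
/-- The data of a complete equality type in `k` variables over a parameter set contained in `X`:
which pairs of variables are equal, and which variables are equal to which parameters. -/
def EqType (X : Type*) (k : ℕ) :=
  (Fin k → Fin k → Prop) × (Fin k → X → Prop)

/-- The complete equality type over `A ⊆ X` (whose elements are identified with elements of `W`
via `ι`, assumed injective on `A`) realized by the tuple `u : Fin k → W`. -/
def eqTypeOf {X : Type*} {W : Type*} (A : Set X) (ι : X → W) {k : ℕ} (u : Fin k → W) :
    EqType X k :=
  ⟨fun i j => u i = u j, fun i x => x ∈ A ∧ u i = ι x⟩

/-- `S_k^∅(A)`: the set of complete equality types in `k` variables over `A`; every consistent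
such type is realized by a tuple in `X ⊕ Fin k` (with `X` embedded by `Sum.inl`). -/
def EqTypes {X : Type*} (A : Set X) (k : ℕ) : Set (EqType X k) :=
  Set.range fun u : Fin k → (X ⊕ Fin k) => eqTypeOf A Sum.inl u
/-- The structure induced on `α` by pulling back a structure on `β` along a map `f : α → β`
(for relational languages). -/
noncomputable def pullback {L : FirstOrder.Language.{u, v}} [L.IsRelational]
    {α : Type*} {β : Type*} (f : α → β) (M : L.Structure β) : L.Structure α where
  funMap := fun {_} F _ => isEmptyElim F
  RelMap := fun {_} R x => M.RelMap R (f ∘ x)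

/-- A hereditary `L`-property: a family of finite `L`-structures (one set of structures with
universe `Fin n = {1,…,n}` for each `n`), closed under pulling back along arbitrary injections;
this encodes closure under isomorphism and under induced substructures. -/
structure HerProp (L : FirstOrder.Language.{u, v}) [L.IsRelational] where
  sets : ∀ n : ℕ, Set (L.Structure (Fin n))
  hereditary : ∀ {m n : ℕ} (f : Fin m ↪ Fin n) (M : L.Structure (Fin n)),
    M ∈ sets n → pullback (⇑f) M ∈ sets m

/-- Realization of a first-order formula in a structure given as a term. -/
def realizeIn {L : FirstOrder.Language.{u, v}} {W : Type w} (M : L.Structure W)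
    {α : Type*} (φ : L.Formula α) (v : α → W) : Prop :=
  letI := M
  φ.Realize v

/-- The `φ`-type (identified with its positive part, a subset of `𝔸`) of the tuple `a` over the
set of parameter tuples `𝔸` (transferred into `W` via `ι`), in the structure `M`. -/
def phiTypeOf {L : FirstOrder.Language.{u, v}} {W : Type w} (M : L.Structure W) {s t : ℕ}
    (φ : L.Formula (Fin s ⊕ Fin t)) {X : Type*} (𝔸 : Set (Fin t → X)) (ι : X → W)
    (a : Fin s → W) : Set (Fin t → X) :=
  { b ∈ 𝔸 | realizeIn M φ (Sum.elim a (ι ∘ b)) }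

variable {L : FirstOrder.Language.{u, v}} [L.IsRelational]

/-- `S_φ^H(𝔸)`: the set of `φ`-types over `𝔸` (identified with their positive parts)
realized in some member of `H` (the parameters being transferred into the member by an
injection on the underlying set of `𝔸`). -/
def Sphi (H : HerProp L) {s t : ℕ} (φ : L.Formula (Fin s ⊕ Fin t)) {X : Type*}
    (𝔸 : Set (Fin t → X)) : Set (Set (Fin t → X)) :=
  { q | ∃ n : ℕ, ∃ M ∈ H.sets n, ∃ ι : X → Fin n, Set.InjOn ι (underlying 𝔸) ∧
      ∃ a : Fin s → Fin n, phiTypeOf M φ 𝔸 ι a = q }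

/-- `S_{φ,m}^H(𝔸,ρ)`: the set of unions `p₁(x̄₁) ∪ ⋯ ∪ p_m(x̄_m)` (identified with the tuple
`(p₁,…,p_m)` of positive parts of `φ`-types over `𝔸`) realized in some member of `H` by
pairwise distinct `s`-tuples `ā₁,…,ā_m` such that moreover each pair `(ā_i,ā_j)`, `i ≠ j`,
realizes the equality type `ρ` over the underlying set of `𝔸`. -/
def SphiM (H : HerProp L) {s t : ℕ} (φ : L.Formula (Fin s ⊕ Fin t)) (m : ℕ) {X : Type*}
    (𝔸 : Set (Fin t → X)) (ρ : EqType X (s + s)) : Set (Fin m → Set (Fin t → X)) :=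
  { P | ∃ n : ℕ, ∃ M ∈ H.sets n, ∃ ι : X → Fin n, Set.InjOn ι (underlying 𝔸) ∧
      ∃ a : Fin m → Fin s → Fin n, Function.Injective a ∧
        (∀ i, phiTypeOf M φ 𝔸 ι (a i) = P i) ∧
        (∀ i j, i ≠ j → eqTypeOf (underlying 𝔸) ι (Fin.append (a i) (a j)) = ρ) }

/-- The witness predicate for `VC*_ℓ(φ,H) ≥ m`: there are an `(ℓ,t)`-box `𝔸` of height `m`
and an equality type `ρ ∈ S_{2s}^∅(𝔸)` with `|S_{φ,m}^H(𝔸,ρ)| = 2^(m^(ℓ+1))`. -/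
def VCstarWitness (H : HerProp L) (ℓ : ℕ) {s t : ℕ} (φ : L.Formula (Fin s ⊕ Fin t))
    (m : ℕ) : Prop :=
  ∃ 𝔸 : Set (Fin t → ℕ), IsBoxOfHeight ℕ ℓ t m 𝔸 ∧
    ∃ ρ ∈ EqTypes (underlying 𝔸) (s + s),
      Nat.card (SphiM H φ m 𝔸 ρ) = 2 ^ m ^ (ℓ + 1)

/-- `VC*_ℓ(H)`, as an extended natural number: the supremum over quantifier-free partitioned
formulas `φ(x̄;ȳ)` of `VC*_ℓ(φ,H)`. -/
noncomputable def VCstar (H : HerProp L) (ℓ : ℕ) : ℕ∞ :=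
  sSup { N : ℕ∞ | ∃ m : ℕ, N = (m : ℕ∞) ∧ ∃ (s t : ℕ) (φ : L.Formula (Fin s ⊕ Fin t)),
      φ.IsQF ∧ VCstarWitness H ℓ φ m }

/-- `F_φ(n)` for the formula `φ ∈ rel(L)` encoded by a relation symbol `R` of arity `t'`
together with a surjection `π : Fin t' → Fin s`: the family of all sets
`φ(M) = {w ∈ [n]^s : w injective and R(w∘π) holds}` as `M` ranges over `H_n`. -/
def relFormulaSet (H : HerProp L) (n : ℕ) {t' s : ℕ} (R : L.Relations t')
    (π : Fin t' → Fin s) : Set (Set (Fin s → Fin n)) :=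
  { U | ∃ M ∈ H.sets n, U = { w : Fin s → Fin n |
      Function.Injective w ∧ M.RelMap R (w ∘ π) } }


section Aux

open FirstOrder.Language

lemma isQF_iInf {L : FirstOrder.Language} {α β : Type*} {n : ℕ} [Finite β]
    (f : β → L.BoundedFormula α n) (h : ∀ b, (f b).IsQF) :
    (BoundedFormula.iInf f).IsQF := by
  have key : ∀ l : List (L.BoundedFormula α n), (∀ ψ ∈ l, ψ.IsQF) →
      (l.foldr (· ⊓ ·) ⊤).IsQF := by
    intro l
    induction l with
    | nil => intro _; exact BoundedFormula.IsQF.top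
    | cons a t ih =>
      intro h'
      exact (h' a (by simp)).inf (ih fun ψ hψ => h' ψ (by simp [hψ]))
  letI := Fintype.ofFinite β
  exact key _ (by simp only [List.mem_map]; rintro ψ ⟨b, -, rfl⟩; exact h b)

/-- The quantifier-free formula asserting that all (object) variables are pairwise distinct. -/
noncomputable def injFormula {L : FirstOrder.Language} {α : Type*} [Fintype α] [DecidableEq α] :
    L.Formula α :=
  BoundedFormula.iInf
    (fun pq : ↥(Finset.univ.offDiag : Finset (α × α)) =>
      ((Term.var pq.1.1).equal (Term.var pq.1.2)).not)

lemma injFormula_isQF {L : FirstOrder.Language} {α : Type*} [Fintype α] [DecidableEq α] :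
    (injFormula (L := L) (α := α)).IsQF := by
  apply isQF_iInf
  intro pq
  exact (BoundedFormula.IsAtomic.equal _ _).isQF.not

lemma realize_injFormula {L : FirstOrder.Language} {α : Type*} [Fintype α] [DecidableEq α]
    {M : Type*} [L.Structure M] (v : α → M) :
    (injFormula (L := L)).Realize v ↔ Function.Injective v := by
  have h3 : (injFormula (L := L)).Realize v ↔
      ∀ pq ∈ (Finset.univ.offDiag : Finset (α × α)), ¬ v pq.1 = v pq.2 := by
    show (BoundedFormula.iInf _).Realize v default ↔ _
    rw [BoundedFormula.realize_iInf, Subtype.forall]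
    refine forall_congr' fun pq => forall_congr' fun _ => ?_
    simp [Term.equal, Term.bdEqual, BoundedFormula.Realize, Term.realize_relabel]
  rw [h3]
  constructor
  · intro h p q hvpq
    by_contra hne
    exact h (p, q) (Finset.mem_offDiag.2 ⟨Finset.mem_univ _, Finset.mem_univ _, hne⟩) hvpq
  · intro hinj pq hpq hv
    exact (Finset.mem_offDiag.1 hpq).2.2 (hinj hv)

end Aux

/-- **From the proof of Theorem 1.3.**  If `L` has maximum arity `r ≥ 2` and
`VC*_{r-1}(H) = d < ∞`, then for every `φ(x;ȳ) ∈ rel(L)` with a single object variable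
(encoded by a relation symbol `R` and a surjection `π : Fin t' → Fin (1+|ȳ|)`) and every
sufficiently large `n`, `VC_r(F_φ(n)) ≤ d`: no `(r,1+|ȳ|)`-box of height `> d` in `[n]` is
shattered by `F_φ(n)`. -/
theorem statement14 {L : FirstOrder.Language.{u, v}} [L.IsRelational]
    [∀ n, Finite (L.Relations n)] (r : ℕ) (hr : 2 ≤ r)
    (harity : ∀ k, r < k → IsEmpty (L.Relations k)) (hmax : Nonempty (L.Relations r))
    (H : HerProp L) (d : ℕ) (hd : VCstar H (r - 1) = (d : ℕ∞))
    {t' y : ℕ} (R : L.Relations t') (π : Fin t' → Fin (1 + y))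
    (hπ : Function.Surjective π) :
    ∀ᶠ n : ℕ in atTop, ∀ (m : ℕ) (𝔸 : Set (Fin (1 + y) → Fin n)),
      IsBoxOfHeight (Fin n) r (1 + y) m 𝔸 →
      Shatters (relFormulaSet H n R π) 𝔸 → m ≤ d := by
  classical
  filter_upwards [eventually_ge_atTop 1] with n hn
  intro m 𝔸 hbox hshat
  rcases Nat.eq_zero_or_pos m with rfl | hm
  · exact Nat.zero_le d
  have ht'r : t' ≤ r := not_lt.1 fun h => (harity t' h).false R
  have hyt' : 1 + y ≤ t' := by
    have := Fintype.card_le_of_surjective π hπ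
    simpa using this
  rcases hbox with ⟨hr0, -⟩ | ⟨hr0, -⟩ | ⟨-, c, hcmono, hcsurj, A, hA, h𝔸⟩
  · omega
  · omega
  have hry : 1 + y = r := by
    have h1 := Fintype.card_le_of_surjective c hcsurj
    simp only [Fintype.card_fin] at h1
    omega
  have hcbij : Function.Bijective c :=
    (Fintype.bijective_iff_surjective_and_card c).2 ⟨hcsurj, by simp [hry]⟩
  have hsub : ∀ (j : Fin (1+y)) (j' : {j' : Fin (1+y) // c j' = c j}), j' = ⟨j, rfl⟩ :=
    fun j j' => Subtype.ext (hcbij.injective j'.2)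
  set D : Fin (1+y) → Set (Fin n) :=
    fun j => (fun f : {j' : Fin (1+y) // c j' = c j} → Fin n => f ⟨j, rfl⟩) '' A (c j) with hD
  have hDfin : ∀ j, (D j).Finite := fun j => (hA (c j)).1.image _
  have hDcard : ∀ j, (D j).ncard = m := by
    intro j
    have hinj : Function.Injective
        (fun f : {j' : Fin (1+y) // c j' = c j} → Fin n => f ⟨j, rfl⟩) := by
      intro f g hfg
      funext j'
      rw [hsub j j']
      exact hfg
    rw [hD]
    simpa [Set.ncard_image_of_injective _ hinj] using (hA (c j)).2
  have h𝔸D : 𝔸 = {b : Fin (1+y) → Fin n | ∀ j, b j ∈ D j} := by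
    rw [h𝔸]
    ext b
    simp only [Set.mem_setOf_eq]
    constructor
    · exact fun hb j => ⟨_, hb (c j), rfl⟩
    · intro hb i
      obtain ⟨j, rfl⟩ := hcbij.surjective i
      obtain ⟨f, hf, hfe⟩ := hb j
      have hfeq : (fun j' : {j' : Fin (1+y) // c j' = c j} => b j'.1) = f := by
        funext j'
        rw [hsub j j']
        exact hfe.symm
      rwa [hfeq]
  have hDne : ∀ j, (D j).Nonempty :=
    fun j => Set.nonempty_of_ncard_ne_zero (by rw [hDcard]; omega)
  have hdisj : ∀ j j' : Fin (1+y), j ≠ j' → ∀ x, x ∈ D j → x ∈ D j' → False := by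
    intro j j' hjj' x hx hx'
    set b : Fin (1+y) → Fin n :=
      fun k => if k = j then x else if k = j' then x else (hDne k).some with hb
    have hb𝔸 : b ∈ 𝔸 := by
      rw [h𝔸D]
      intro k
      by_cases h1 : k = j
      · simpa [hb, h1] using hx
      · by_cases h2 : k = j'
        · simpa [hb, h1, h2] using hx'
        · simpa [hb, h1, h2] using (hDne k).some_mem
    obtain ⟨S, hSF, hScap⟩ := hshat {b} (by simpa using hb𝔸)
    obtain ⟨M, hM, rfl⟩ := hSF
    have hbS : b ∈ {w : Fin (1+y) → Fin n |
        Function.Injective w ∧ M.RelMap R (w ∘ π)} ∩ 𝔸 := by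
      rw [hScap]; rfl
    have hbj : b j = b j' := by simp [hb, Ne.symm hjj']
    exact hjj' (hbS.1.1 hbj)
  set e : Fin 1 ⊕ Fin y ≃ Fin (1+y) := finSumFinEquiv with he
  have hj0jr : ∀ k : Fin y, e (Sum.inl 0) ≠ e (Sum.inr k) := by
    intro k h
    have := e.injective h
    simp at this
  haveI : Finite ↥(D (e (Sum.inl 0))) := (hDfin _).to_subtype
  set g : Fin m ≃ ↥(D (e (Sum.inl 0))) :=
    (Finite.equivFinOfCardEq (by rw [Nat.card_coe_set_eq, hDcard])).symm with hg
  set b₁ : Fin m → Fin n := fun i => (g i).1 with hb₁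
  have hb₁inj : Function.Injective b₁ := fun i i' h => g.injective (Subtype.ext h)
  have hb₁mem : ∀ i, b₁ i ∈ D (e (Sum.inl 0)) := fun i => (g i).2
  set D' : Fin y → Set ℕ := fun k => Fin.val '' D (e (Sum.inr k)) with hD'
  set 𝔸' : Set (Fin y → ℕ) := {b | ∀ k, b k ∈ D' k} with h𝔸'
  have hD'fin : ∀ k, (D' k).Finite := fun k => (hDfin _).image _
  have hD'card : ∀ k, (D' k).ncard = m := by
    intro k
    rw [hD']
    simpa [Set.ncard_image_of_injective _ Fin.val_injective] using hDcard (e (Sum.inr k))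
  have hn0 : 0 < n := hn
  set ιn : ℕ → Fin n := fun x => ⟨x % n, Nat.mod_lt x hn0⟩ with hιn
  have hιval : ∀ u : Fin n, ιn u.1 = u := fun u => Fin.ext (Nat.mod_eq_of_lt u.2)
  have hval' : ∀ {k : Fin y} {x : ℕ}, x ∈ D' k → (ιn x).1 = x := by
    rintro k x ⟨u, hu, rfl⟩
    rw [hιval]
  have hιmem : ∀ {k : Fin y} {x : ℕ}, x ∈ D' k → ιn x ∈ D (e (Sum.inr k)) := by
    rintro k x ⟨u, hu, rfl⟩
    rwa [hιval]
  have hund : ∀ x ∈ underlying 𝔸', ∃ k, x ∈ D' k := by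
    rintro x ⟨b, hb, k, rfl⟩
    exact ⟨k, hb k⟩
  have hιInj : Set.InjOn ιn (underlying 𝔸') := by
    intro x hx x' hx' hxx'
    obtain ⟨k, hk⟩ := hund x hx
    obtain ⟨k', hk'⟩ := hund x' hx'
    rw [← hval' hk, ← hval' hk', hxx']
  -- the formula φ(x;ȳ)
  set φ : L.Formula (Fin 1 ⊕ Fin y) :=
    (R.formula (fun l => Language.Term.var (e.symm (π l)))) ⊓ injFormula with hφ
  have hφQF : φ.IsQF := ((Language.BoundedFormula.IsAtomic.rel _ _).isQF).inf injFormula_isQF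
  have hφreal : ∀ (M : L.Structure (Fin n)) (v : Fin 1 ⊕ Fin y → Fin n),
      realizeIn M φ v ↔
        (Function.Injective (v ∘ ⇑e.symm) ∧ M.RelMap R ((v ∘ ⇑e.symm) ∘ π)) := by
    intro M v
    letI := M
    show φ.Realize v ↔ _
    rw [hφ, Language.Formula.realize_inf, realize_injFormula, Language.Formula.realize_rel]
    simp only [Language.Term.realize_var]
    rw [Equiv.injective_comp e.symm v]
    rw [show ((fun i => v (e.symm (π i))) : Fin t' → Fin n) = (v ∘ ⇑e.symm) ∘ π from rfl]
    exact and_comm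
  -- membership of combined tuples in the box
  have hw𝔸 : ∀ (i : Fin m) (b : Fin y → ℕ), b ∈ 𝔸' →
      (Sum.elim (fun _ : Fin 1 => b₁ i) (ιn ∘ b)) ∘ ⇑e.symm ∈ 𝔸 := by
    intro i b hb
    rw [h𝔸D]
    intro j
    rcases hsj : e.symm j with p | k
    · have hp : p = 0 := Subsingleton.elim _ _
      have hj : j = e (Sum.inl 0) := by rw [← e.apply_symm_apply j, hsj, hp]
      have hval : ((Sum.elim (fun _ : Fin 1 => b₁ i) (ιn ∘ b)) ∘ ⇑e.symm) j = b₁ i := by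
        rw [Function.comp_apply, hsj]
        rfl
      rw [hval, hj]
      exact hb₁mem i
    · have hj : j = e (Sum.inr k) := by rw [← e.apply_symm_apply j, hsj]
      have hval : ((Sum.elim (fun _ : Fin 1 => b₁ i) (ιn ∘ b)) ∘ ⇑e.symm) j = ιn (b k) := by
        rw [Function.comp_apply, hsj]
        rfl
      rw [hval, hj]
      exact hιmem (hb k)
  -- values of appended pairs
  have happval : ∀ (u u' : Fin n) (p : Fin (1+1)),
      Fin.append (fun _ : Fin 1 => u) (fun _ : Fin 1 => u') p
        = if (p : ℕ) = 0 then u else u' := by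
    intro u u' p
    have hp : p = ⟨0, by omega⟩ ∨ p = ⟨1, by omega⟩ := by
      rcases p with ⟨pv, hpv⟩
      interval_cases pv
      · exact Or.inl rfl
      · exact Or.inr rfl
    rcases hp with rfl | rfl
    · rw [show ((⟨0, by omega⟩ : Fin (1+1)) : ℕ) = 0 from rfl, if_pos rfl]
      exact Fin.append_left (fun _ : Fin 1 => u) (fun _ : Fin 1 => u') 0
    · rw [show ((⟨1, by omega⟩ : Fin (1+1)) : ℕ) = 1 from rfl, if_neg one_ne_zero]
      exact Fin.append_right (fun _ : Fin 1 => u) (fun _ : Fin 1 => u') 0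
  set ρ : EqType ℕ (1+1) := eqTypeOf (underlying 𝔸') Sum.inl
      (fun p : Fin (1+1) => Sum.inr p) with hρ
  have hrho : ∀ i i' : Fin m, i ≠ i' →
      eqTypeOf (underlying 𝔸') ιn
        (Fin.append (fun _ : Fin 1 => b₁ i) (fun _ : Fin 1 => b₁ i')) = ρ := by
    intro i i' hii'
    have hbne : b₁ i ≠ b₁ i' := fun h => hii' (hb₁inj h)
    have hmem : ∀ p : Fin (1+1),
        Fin.append (fun _ : Fin 1 => b₁ i) (fun _ : Fin 1 => b₁ i') p ∈ D (e (Sum.inl 0)) := by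
      intro p
      rw [happval]
      split_ifs
      · exact hb₁mem i
      · exact hb₁mem i'
    rw [hρ]
    unfold eqTypeOf
    refine Prod.ext ?_ ?_
    · funext p q
      apply propext
      dsimp only
      rw [happval, happval]
      constructor
      · intro hpq
        by_contra hne
        have hpq' : (p : ℕ) ≠ (q : ℕ) := fun h => hne (congrArg Sum.inr (Fin.ext h))
        rcases Nat.eq_zero_or_pos (p : ℕ) with hp0 | hp0
        · have hq0 : (q : ℕ) ≠ 0 := fun h => hpq' (by rw [hp0, h])
          rw [if_pos hp0, if_neg hq0] at hpq
          exact hbne hpq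
        · have hp0' : (p : ℕ) ≠ 0 := Nat.pos_iff_ne_zero.1 hp0
          rcases Nat.eq_zero_or_pos (q : ℕ) with hq0 | hq0
          · rw [if_neg hp0', if_pos hq0] at hpq
            exact hbne hpq.symm
          · have hq0' : (q : ℕ) ≠ 0 := Nat.pos_iff_ne_zero.1 hq0
            have hple : (p : ℕ) < 1 + 1 := p.2
            have hqle : (q : ℕ) < 1 + 1 := q.2
            exact hpq' (by omega)
      · intro hpq
        rw [Sum.inr.inj hpq]
    · funext p x
      apply propext
      dsimp only
      constructor
      · rintro ⟨hx, heq⟩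
        exfalso
        obtain ⟨k, hk⟩ := hund x hx
        have h1 := hmem p
        rw [heq] at h1
        exact hdisj _ _ (hj0jr k) _ h1 (hιmem hk)
      · rintro ⟨hx, heq⟩
        exact absurd heq (by simp)
  -- identification of SphiM
  have hSph : SphiM H φ m 𝔸' ρ = {P : Fin m → Set (Fin y → ℕ) | ∀ i, P i ⊆ 𝔸'} := by
    ext P
    simp only [Set.mem_setOf_eq]
    constructor
    · rintro ⟨n', M, hM, ι, hι, a, ha, hty, -⟩ i
      rw [← hty i]
      exact fun b hb => hb.1
    · intro hP
      set BP : Set (Fin (1+y) → Fin n) :=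
        {w | w ∈ 𝔸 ∧ ∃ i, w (e (Sum.inl 0)) = b₁ i ∧ (fun k => (w (e (Sum.inr k))).1) ∈ P i}
        with hBP
      obtain ⟨S, hSF, hScap⟩ := hshat BP (fun w hw => hw.1)
      obtain ⟨M, hM, rfl⟩ := hSF
      refine ⟨n, M, hM, ιn, hιInj, (fun i _ => b₁ i),
        fun i i' h => hb₁inj (congrFun h 0), ?_, fun i i' h => hrho i i' h⟩
      intro i
      ext b
      simp only [phiTypeOf, Set.mem_sep_iff]
      set v : Fin 1 ⊕ Fin y → Fin n := Sum.elim (fun _ : Fin 1 => b₁ i) (ιn ∘ b) with hv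
      have hvj0 : (v ∘ ⇑e.symm) (e (Sum.inl 0)) = b₁ i := by
        rw [Function.comp_apply, e.symm_apply_apply]
        rfl
      have hvjr : ∀ k, (v ∘ ⇑e.symm) (e (Sum.inr k)) = ιn (b k) := by
        intro k
        rw [Function.comp_apply, e.symm_apply_apply]
        rfl
      constructor
      · rintro ⟨hb𝔸', hreal⟩
        rw [hφreal] at hreal
        have hwBP : v ∘ ⇑e.symm ∈ BP := by
          rw [← hScap]
          exact ⟨⟨hreal.1, hreal.2⟩, hw𝔸 i b hb𝔸'⟩
        obtain ⟨-, i', hi'1, hi'2⟩ := hwBP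
        have hii : i' = i := hb₁inj (by rw [← hi'1, hvj0])
        have hfb : (fun k => ((v ∘ ⇑e.symm) (e (Sum.inr k))).1) = b := by
          funext k
          rw [hvjr k]
          exact hval' (hb𝔸' k)
        rw [hii] at hi'2
        rwa [hfb] at hi'2
      · intro hbP
        have hb𝔸' : b ∈ 𝔸' := hP i hbP
        refine ⟨hb𝔸', ?_⟩
        rw [hφreal]
        have hwBP : v ∘ ⇑e.symm ∈ BP := by
          refine ⟨hw𝔸 i b hb𝔸', i, hvj0, ?_⟩
          have hfb : (fun k => ((v ∘ ⇑e.symm) (e (Sum.inr k))).1) = b := by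
            funext k
            rw [hvjr k]
            exact hval' (hb𝔸' k)
          rwa [hfb]
        rw [← hScap] at hwBP
        exact ⟨hwBP.1.1, hwBP.1.2⟩
  -- cardinality computations
  have h𝔸'fin : (𝔸' : Set (Fin y → ℕ)).Finite := Set.Finite.pi' hD'fin
  haveI hfinsub : Finite ↥𝔸' := h𝔸'fin.to_subtype
  have h𝔸'eq : 𝔸' = Set.pi Set.univ D' := by
    ext b
    simp [Set.mem_pi, h𝔸']
  have hcard𝔸' : Nat.card ↥𝔸' = m ^ y := by
    rw [h𝔸'eq, Nat.card_congr (Equiv.Set.univPi D'), Nat.card_pi]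
    calc ∏ k : Fin y, Nat.card ↥(D' k) = ∏ _k : Fin y, m :=
          Finset.prod_congr rfl fun k _ => by rw [Nat.card_coe_set_eq, hD'card]
      _ = m ^ y := by simp
  have hcardP : Nat.card ↥{P : Fin m → Set (Fin y → ℕ) | ∀ i, P i ⊆ 𝔸'} = 2 ^ (m ^ y * m) := by
    have e1 : {P : Fin m → Set (Fin y → ℕ) | ∀ i, P i ⊆ 𝔸'}
        = Set.pi Set.univ (fun _ : Fin m => 𝒫 𝔸') := by
      ext P
      simp [Set.mem_pi, Set.mem_powerset_iff]
    rw [e1, Nat.card_congr (Equiv.Set.univPi _), Nat.card_pi]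
    have e2 : Nat.card ↥(𝒫 𝔸') = 2 ^ (m ^ y) := by
      rw [Nat.card_congr (Equiv.Set.powerset 𝔸')]
      rw [Nat.card_congr (show Set ↥𝔸' ≃ (↥𝔸' → Bool) from
        Equiv.arrowCongr (Equiv.refl ↥𝔸') Equiv.propEquivBool)]
      rw [Nat.card_fun]
      simp [Nat.card_eq_fintype_card, hcard𝔸']
    calc ∏ _i : Fin m, Nat.card ↥(𝒫 𝔸') = ∏ _i : Fin m, 2 ^ (m ^ y) :=
          Finset.prod_congr rfl fun i _ => e2
      _ = (2 ^ (m ^ y)) ^ m := by simp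
      _ = 2 ^ (m ^ y * m) := by rw [← pow_mul]
  have hyr : y = r - 1 := by rw [← hry, Nat.add_sub_cancel_left]
  -- the witness box in ℕ
  have hbox' : IsBoxOfHeight ℕ (r-1) y m 𝔸' := by
    refine Or.inr (Or.inr ⟨Nat.sub_pos_of_lt hr, fun k => Fin.cast hyr k, ?_, ?_,
      fun i => (fun x : ℕ => fun _ => x) '' D' (Fin.cast hyr.symm i), ?_, ?_⟩)
    · intro a b hab
      exact hab
    · intro i
      exact ⟨Fin.cast hyr.symm i, by ext; simp⟩
    · intro i
      have hptmem : Fin.cast hyr (Fin.cast hyr.symm i) = i := by ext; simp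
      have hconstinj : Function.Injective
          (fun x : ℕ => (fun _ : {k : Fin y // Fin.cast hyr k = i} => x)) := by
        intro x x' hxx'
        exact congrFun hxx' ⟨Fin.cast hyr.symm i, hptmem⟩
      constructor
      · exact (hD'fin _).image _
      · rw [Set.ncard_image_of_injective _ hconstinj]
        exact hD'card _
    · ext b
      simp only [Set.mem_setOf_eq]
      constructor
      · intro hb i
        refine ⟨b (Fin.cast hyr.symm i), hb _, ?_⟩
        funext k
        have hk : k.1 = Fin.cast hyr.symm i := by
          ext
          have h2 : ((Fin.cast hyr k.1 : Fin (r-1)) : ℕ) = (i : ℕ) := by rw [k.2]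
          simpa using h2.symm ▸ (by simp : ((Fin.cast hyr.symm i : Fin y) : ℕ) = (i : ℕ)).symm
        rw [hk]
      · intro hb k
        obtain ⟨x, hx, hfx⟩ := hb (Fin.cast hyr k)
        have hbk : b k = x := (congrFun hfx ⟨k, rfl⟩).symm
        have hkk : Fin.cast hyr.symm (Fin.cast hyr k) = k := by ext; simp
        rw [hbk]
        rwa [hkk] at hx
  -- conclusion
  have hwit : VCstarWitness H (r-1) φ m := by
    refine ⟨𝔸', hbox', ρ, ⟨_, rfl⟩, ?_⟩
    rw [hSph, hcardP]
    congr 1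
    rw [← pow_succ]
    congr 1
    rw [hyr]
  have hle : (m : ℕ∞) ≤ VCstar H (r-1) :=
    le_sSup ⟨m, rfl, 1, y, φ, hφQF, hwit⟩
  rw [hd] at hle
  exact_mod_cast hle

end PaperVC
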